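/- Let M(G, V_k) be as below and let Ω be a free PMC of M(G, V_k) such that V_k \ Ω is partitioned into exactly one nonempty connected part P_1 (i.e., V_k \ Ω lies in a single component of M(G,V_k) \ Ω and V_k ∩ Ω ≠ ∅). Then the number of such free PMCs with this fixed partition {V_k ∩ Ω, P_1} of V_k is at most k. -/

import Mathlib

/-- The graph `H` with vertices of `Ω` made isolated (edges within `V \ Ω`). -/
def restrict {V : Type*} (H : SimpleGraph V) (Ω : Set V) : SimpleGraph V where
  Adj a b := H.Adj a b ∧ a ∉ Ω ∧ b ∉ Ω
  symm := ⟨fun _ _ ⟨h, ha, hb⟩ => ⟨h.symm, hb, ha⟩⟩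
  loopless := ⟨fun a h => H.loopless.irrefl a h.1⟩

/-- `C` is the vertex set of a connected component of `H \ Ω`. -/
def IsCompOf {V : Type*} (H : SimpleGraph V) (Ω C : Set V) : Prop :=
  ∃ a, a ∉ Ω ∧ C = {b | b ∉ Ω ∧ (restrict H Ω).Reachable a b}

/-- Neighborhood of a vertex set: vertices outside `C` adjacent to some vertex of `C`. -/
def nbhd {V : Type*} (H : SimpleGraph V) (C : Set V) : Set V :=
  {w | w ∉ C ∧ ∃ c ∈ C, H.Adj w c}

/-- `Ω` is a potential maximal clique of `H`. -/
def IsPMC {V : Type*} (H : SimpleGraph V) (Ω : Set V) : Prop :=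
  (∀ C, IsCompOf H Ω C → nbhd H C ≠ Ω) ∧
  (∀ u ∈ Ω, ∀ v ∈ Ω, u ≠ v →
    H.Adj u v ∨ ∃ C, IsCompOf H Ω C ∧ u ∈ nbhd H C ∧ v ∈ nbhd H C)

/-- A PMC is free if every vertex of `Ω` has a neighbor outside `Ω`. -/
def IsFree {V : Type*} (H : SimpleGraph V) (Ω : Set V) : Prop :=
  ∀ v ∈ Ω, ∃ w, w ∉ Ω ∧ H.Adj v w

/-- `G` together with a vertex `M_X` for each nonempty `X ⊆ Vk`, adjacent exactly to `X`. -/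
def Mgraph {V : Type*} (G : SimpleGraph V) (Vk : Set V) :
    SimpleGraph (V ⊕ {X : Set V // X ⊆ Vk ∧ X.Nonempty}) where
  Adj a b := match a, b with
    | .inl u, .inl w => G.Adj u w
    | .inl u, .inr X => u ∈ X.val
    | .inr X, .inl u => u ∈ X.val
    | .inr _, .inr _ => False
  symm := ⟨by rintro (u|X) (w|Y) h <;> simp_all <;> exact h.symm⟩
  loopless := ⟨by rintro (u|X) h <;> simp_all⟩

lemma comp_closed {V : Type*} {H : SimpleGraph V} {Ω C : Set V}
    (hC : IsCompOf H Ω C) {x y : V} (hx : x ∈ C) (hy : y ∉ Ω)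
    (hadj : H.Adj x y) : y ∈ C := by
  obtain ⟨a, ha, rfl⟩ := hC
  exact ⟨hy, hx.2.trans (SimpleGraph.Adj.reachable (show H.Adj x y ∧ x ∉ Ω ∧ y ∉ Ω from ⟨hadj, hx.1, hy⟩))⟩

lemma comp_disj {V : Type*} {H : SimpleGraph V} {Ω C : Set V}
    (hC : IsCompOf H Ω C) {x} (hx : x ∈ C) : x ∉ Ω := by
  obtain ⟨a, ha, rfl⟩ := hC; exact hx.1

lemma comp_eq {V : Type*} {H : SimpleGraph V} {Ω C C' : Set V}
    (hC : IsCompOf H Ω C) (hC' : IsCompOf H Ω C') {x} (hx : x ∈ C) (hx' : x ∈ C') :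
    C = C' := by
  obtain ⟨a, ha, rfl⟩ := hC
  obtain ⟨a', ha', rfl⟩ := hC'
  ext b
  constructor
  · rintro ⟨hb, hr⟩; exact ⟨hb, hx'.2.trans (hx.2.symm.trans hr)⟩
  · rintro ⟨hb, hr⟩; exact ⟨hb, hx.2.trans (hx'.2.symm.trans hr)⟩

lemma nbhd_sub {V : Type*} {H : SimpleGraph V} {Ω C : Set V}
    (hC : IsCompOf H Ω C) : nbhd H C ⊆ Ω := by
  rintro w ⟨hwC, c, hc, hadj⟩
  by_contra hw
  exact hwC (comp_closed hC hc hw hadj.symm)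

/-- The candidate PMC determined by a vertex `a0`. -/
def Fset {V : Type*} (G : SimpleGraph V) (Vk A P1 : Set V) (a0 : V) :
    Set (V ⊕ {X : Set V // X ⊆ Vk ∧ X.Nonempty}) :=
  {z | match z with
    | .inl v => (v ∈ Vk ∧ v ∈ A) ∨ (v ∉ Vk ∧ G.Adj a0 v ∧ ∃ p ∈ P1, G.Adj v p)
    | .inr X => a0 ∈ X.val ∧ ∃ p ∈ P1, p ∈ X.val}

theorem stmt12 {V : Type*} [Fintype V] (G : SimpleGraph V) (Vk : Set V) (k : ℕ)
    (hcard : Vk.ncard = k)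
    (hvc : ∀ a b, G.Adj a b → a ∈ Vk ∨ b ∈ Vk)
    (A P1 : Set V) (hA : A.Nonempty) (hP1 : P1.Nonempty)
    (hdisj : Disjoint A P1) (hunion : A ∪ P1 = Vk) :
    {Ω : Set (V ⊕ {X : Set V // X ⊆ Vk ∧ X.Nonempty}) |
      IsPMC (Mgraph G Vk) Ω ∧ IsFree (Mgraph G Vk) Ω ∧
      (∀ v ∈ Vk, Sum.inl v ∈ Ω ↔ v ∈ A) ∧
      ∃ C, IsCompOf (Mgraph G Vk) Ω C ∧ ∀ v ∈ P1, Sum.inl v ∈ C}.ncard ≤ k := by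
  classical
  have hAVk : A ⊆ Vk := hunion ▸ Set.subset_union_left
  have hP1mem : ∀ p ∈ Vk, p ∉ A → p ∈ P1 := by
    intro p hp hpA
    rcases (hunion ▸ hp : p ∈ A ∪ P1) with h | h
    · exact absurd h hpA
    · exact h
  have key : {Ω : Set (V ⊕ {X : Set V // X ⊆ Vk ∧ X.Nonempty}) |
      IsPMC (Mgraph G Vk) Ω ∧ IsFree (Mgraph G Vk) Ω ∧
      (∀ v ∈ Vk, Sum.inl v ∈ Ω ↔ v ∈ A) ∧
      ∃ C, IsCompOf (Mgraph G Vk) Ω C ∧ ∀ v ∈ P1, Sum.inl v ∈ C}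
      ⊆ (Fset G Vk A P1) '' A := by
    rintro Ω ⟨⟨h1, h2⟩, hfree, hAiff, C, hCcomp, hP1C⟩
    have hNC : nbhd (Mgraph G Vk) C ⊆ Ω := nbhd_sub hCcomp
    have hne : nbhd (Mgraph G Vk) C ≠ Ω := h1 C hCcomp
    -- every free vertex of Ω that is not `inl` of a cover vertex lies in N(C)
    have hfreeC : ∀ z ∈ Ω, (∀ v ∈ Vk, z ≠ Sum.inl v) → z ∈ nbhd (Mgraph G Vk) C := by
      intro z hz hzform
      obtain ⟨w, hwΩ, hadj⟩ := hfree z hz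
      have hzC : z ∉ C := fun h => comp_disj hCcomp h hz
      rcases w with p | X
      · -- w = inl p; show p ∈ P1
        have hpVk : p ∈ Vk := by
          rcases z with v | X
          · have hv : v ∉ Vk := fun hv => hzform v hv rfl
            have : G.Adj v p := hadj
            rcases hvc v p this with h | h
            · exact absurd h hv
            · exact h
          · exact X.2.1 hadj
        have hpP1 : p ∈ P1 := hP1mem p hpVk (fun h => hwΩ ((hAiff p hpVk).mpr h))
        exact ⟨hzC, Sum.inl p, hP1C p hpP1, hadj⟩
      · -- w = inr X : then z must be inl v with v ∈ X ⊆ Vk, contradiction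
        rcases z with v | Y
        · exact absurd (X.2.1 hadj) (fun h => hzform v h rfl)
        · exact absurd hadj (by simp [Mgraph])
    -- extract a0 ∈ A with inl a0 ∈ Ω \ N(C)
    have hex : ∃ u ∈ Ω, u ∉ nbhd (Mgraph G Vk) C := by
      by_contra h
      push_neg at h
      exact hne (Set.Subset.antisymm hNC h)
    obtain ⟨u, huΩ, huN⟩ := hex
    obtain ⟨a0, ha0Vk, rfl⟩ : ∃ v ∈ Vk, u = Sum.inl v := by
      by_contra h
      push_neg at h
      exact huN (hfreeC u huΩ h)
    have ha0A : a0 ∈ A := (hAiff a0 ha0Vk).mp huΩ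
    have ha0C : Sum.inl a0 ∉ C := fun h => comp_disj hCcomp h huΩ
    have ha0 : ∀ c ∈ C, ¬ (Mgraph G Vk).Adj (Sum.inl a0) c := by
      intro c hc hadj
      exact huN ⟨ha0C, c, hc, hadj⟩
    refine ⟨a0, ha0A, ?_⟩
    -- show Fset G Vk A P1 a0 = Ω
    ext z
    rcases z with v | X
    · by_cases hv : v ∈ Vk
      · constructor
        · rintro (⟨_, hvA⟩ | ⟨hvn, _⟩)
          · exact (hAiff v hv).mpr hvA
          · exact absurd hv hvn
        · intro hz
          exact Or.inl ⟨hv, (hAiff v hv).mp hz⟩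
      · constructor
        · rintro (⟨hvVk, _⟩ | ⟨_, hadj, p, hpP1, hvp⟩)
          · exact absurd hvVk hv
          · by_contra hzΩ
            have hpC : Sum.inl p ∈ C := hP1C p hpP1
            have hvC : Sum.inl v ∈ C :=
              comp_closed hCcomp hpC hzΩ (show G.Adj p v from hvp.symm)
            exact ha0 _ hvC hadj
        · intro hz
          refine Or.inr ⟨hv, ?_, ?_⟩
          · -- G.Adj a0 v via condition (2)
            have hne' : (Sum.inl a0 : V ⊕ {X : Set V // X ⊆ Vk ∧ X.Nonempty}) ≠ Sum.inl v := by
              intro h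
              exact hv (Sum.inl.inj h ▸ ha0Vk)
            rcases h2 _ huΩ _ hz hne' with hadj | ⟨C', hC', ha0N, ⟨_, c, hcC', hcadj⟩⟩
            · exact hadj
            · exfalso
              rcases c with p | X
              · have hvp : G.Adj v p := hcadj
                have hpVk : p ∈ Vk := by
                  rcases hvc v p hvp with h | h
                  · exact absurd h hv
                  · exact h
                have hpΩ : Sum.inl p ∉ Ω := comp_disj hC' hcC'
                have hpP1 : p ∈ P1 := hP1mem p hpVk (fun h => hpΩ ((hAiff p hpVk).mpr h))
                have hCC : C = C' := comp_eq hCcomp hC' (hP1C p hpP1) hcC'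
                rw [← hCC] at ha0N
                obtain ⟨_, c', hc'C, hc'adj⟩ := ha0N
                exact ha0 c' hc'C hc'adj
              · exact absurd (X.2.1 hcadj) hv
          · -- ∃ p ∈ P1, G.Adj v p via freeness
            obtain ⟨w, hwΩ, hadj⟩ := hfree _ hz
            rcases w with p | X
            · have hvp : G.Adj v p := hadj
              have hpVk : p ∈ Vk := by
                rcases hvc v p hvp with h | h
                · exact absurd h hv
                · exact h
              exact ⟨p, hP1mem p hpVk (fun h => hwΩ ((hAiff p hpVk).mpr h)), hvp⟩
            · exact absurd (X.2.1 hadj) hv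
    · constructor
      · rintro ⟨ha0X, p, hpP1, hpX⟩
        by_contra hzΩ
        have hpC : Sum.inl p ∈ C := hP1C p hpP1
        have hXC : (Sum.inr X : V ⊕ _) ∈ C :=
          comp_closed hCcomp hpC hzΩ (show p ∈ X.val from hpX)
        exact ha0 _ hXC (show a0 ∈ X.val from ha0X)
      · intro hz
        constructor
        · -- a0 ∈ X via condition (2)
          have hne' : (Sum.inl a0 : V ⊕ {X : Set V // X ⊆ Vk ∧ X.Nonempty}) ≠ Sum.inr X := by simp
          rcases h2 _ huΩ _ hz hne' with hadj | ⟨C', hC', ha0N, ⟨_, c, hcC', hcadj⟩⟩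
          · exact hadj
          · exfalso
            rcases c with p | Y
            · have hpX : p ∈ X.val := hcadj
              have hpVk : p ∈ Vk := X.2.1 hpX
              have hpΩ : Sum.inl p ∉ Ω := comp_disj hC' hcC'
              have hpP1 : p ∈ P1 := hP1mem p hpVk (fun h => hpΩ ((hAiff p hpVk).mpr h))
              have hCC : C = C' := comp_eq hCcomp hC' (hP1C p hpP1) hcC'
              rw [← hCC] at ha0N
              obtain ⟨_, c', hc'C, hc'adj⟩ := ha0N
              exact ha0 c' hc'C hc'adj
            · exact absurd hcadj (by simp [Mgraph])
        · -- X ∩ P1 ≠ ∅ via freeness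
          obtain ⟨w, hwΩ, hadj⟩ := hfree _ hz
          rcases w with p | Y
          · have hpX : p ∈ X.val := hadj
            have hpVk : p ∈ Vk := X.2.1 hpX
            exact ⟨p, hP1mem p hpVk (fun h => hwΩ ((hAiff p hpVk).mpr h)), hpX⟩
          · exact absurd hadj (by simp [Mgraph])
  calc {Ω : Set (V ⊕ {X : Set V // X ⊆ Vk ∧ X.Nonempty}) |
      IsPMC (Mgraph G Vk) Ω ∧ IsFree (Mgraph G Vk) Ω ∧
      (∀ v ∈ Vk, Sum.inl v ∈ Ω ↔ v ∈ A) ∧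
      ∃ C, IsCompOf (Mgraph G Vk) Ω C ∧ ∀ v ∈ P1, Sum.inl v ∈ C}.ncard
      ≤ ((Fset G Vk A P1) '' A).ncard := Set.ncard_le_ncard key (Set.toFinite _)
    _ ≤ A.ncard := Set.ncard_image_le (Set.toFinite A)
    _ ≤ Vk.ncard := Set.ncard_le_ncard hAVk (Set.toFinite Vk)
    _ = k := hcard
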